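/- Let a ∈ (0,1), β > 0, C ≥ 0, let (C_n)_{n≥1} be a real sequence with C_n → c > 0, and let (A_n)_{n≥1} be a sequence of positive reals satisfying A_{n+1} = (1 − C_n·n^{−a})·A_n + C·n^{−a−β} for all n ≥ 1. Then sup_{n≥1} n^{β}·A_n < ∞. -/
import Mathlib


open Filter Topology

set_option maxHeartbeats 1000000

lemma exp_le_one_add_aux (t T : ℝ) (ht : 0 ≤ t) (hT : t ≤ T) :
    Real.exp t ≤ 1 + t * Real.exp T := by
  have h1 : (-t) + 1 ≤ Real.exp (-t) := Real.add_one_le_exp _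
  have h2 : Real.exp (-t) * Real.exp t = 1 := by rw [← Real.exp_add]; simp
  have h3 : Real.exp t ≤ Real.exp T := Real.exp_le_exp.mpr hT
  nlinarith [Real.exp_pos t, Real.exp_pos T,
    mul_le_mul_of_nonneg_right h1 (Real.exp_pos t).le]

/-- Fabian's recursion lemma, `a ∈ (0,1)`: if `A_{n+1} = (1 - C_n n^{-a}) A_n
+ C n^{-a-β}` with `A_n > 0` and `C_n → c > 0`, then `sup_n n^β A_n < ∞`. -/
theorem fabian_recursion_sublinear
    (a β C : ℝ) (ha : a ∈ Set.Ioo (0:ℝ) 1) (hβ : 0 < β) (hC : 0 ≤ C)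
    (Cseq : ℕ → ℝ) (c : ℝ) (hc : 0 < c)
    (hCseq : Tendsto Cseq atTop (𝓝 c))
    (A : ℕ → ℝ) (hApos : ∀ n : ℕ, 1 ≤ n → 0 < A n)
    (hrec : ∀ n : ℕ, 1 ≤ n →
      A (n+1) = (1 - Cseq n * (n:ℝ) ^ (-a)) * A n + C * (n:ℝ) ^ (-a - β)) :
    ∃ B : ℝ, ∀ n : ℕ, 1 ≤ n → (n:ℝ) ^ β * A n ≤ B := by
  obtain ⟨ha0, ha1⟩ := ha
  set K := β * Real.exp β with hKdef
  have hK0 : 0 ≤ K := by positivity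
  have h1 : ∀ᶠ n : ℕ in atTop, c/2 ≤ Cseq n :=
    hCseq.eventually (eventually_ge_nhds (by linarith))
  have h2 : ∀ᶠ n : ℕ in atTop, Cseq n ≤ c + 1 :=
    hCseq.eventually (eventually_le_nhds (by linarith))
  have hx0 : Tendsto (fun n : ℕ => (n:ℝ) ^ (-a)) atTop (𝓝 0) :=
    (tendsto_rpow_neg_atTop ha0).comp tendsto_natCast_atTop_atTop
  have h3 : ∀ᶠ n : ℕ in atTop, (c+1) * (n:ℝ)^(-a) ≤ 1/2 := by
    have := (hx0.const_mul (c+1)).eventually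
      (eventually_le_nhds (show (c+1) * 0 < 1/2 by norm_num))
    simpa using this
  have hy0 : Tendsto (fun n : ℕ => (n:ℝ) ^ (a-1)) atTop (𝓝 0) := by
    have : Tendsto (fun n : ℕ => (n:ℝ) ^ (-(1-a))) atTop (𝓝 0) :=
      (tendsto_rpow_neg_atTop (by linarith)).comp tendsto_natCast_atTop_atTop
    simpa [neg_sub] using this
  have h4 : ∀ᶠ n : ℕ in atTop, K * (n:ℝ)^(a-1) ≤ c/8 := by
    have := (hy0.const_mul K).eventually
      (eventually_le_nhds (show K * 0 < c/8 by simpa using by positivity))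
    simpa using this
  obtain ⟨N0, hN0⟩ := eventually_atTop.mp
    ((((h1.and h2).and (h3.and h4)).and (eventually_ge_atTop 1)))
  set N := max N0 1 with hNdef
  have hN1 : 1 ≤ N := le_max_right _ _
  have hprop : ∀ n : ℕ, N ≤ n →
      (c/2 ≤ Cseq n ∧ Cseq n ≤ c + 1) ∧
      ((c+1) * (n:ℝ)^(-a) ≤ 1/2 ∧ K * (n:ℝ)^(a-1) ≤ c/8) ∧ 1 ≤ n := by
    intro n hn
    have h := hN0 n (le_trans (le_max_left _ _) hn)
    exact ⟨h.1.1, ⟨h.1.2.1, h.1.2.2⟩, h.2⟩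
  set C' := C * (1 + K) with hC'def
  have hC'0 : 0 ≤ C' := by positivity
  obtain ⟨S, hSdef⟩ : ∃ S : ℝ, S = ∑ k ∈ Finset.Icc 1 N, (k:ℝ)^β * A k := ⟨_, rfl⟩
  have hSnonneg : 0 ≤ S := by
    rw [hSdef]
    apply Finset.sum_nonneg
    intro k hk
    have hk1 : 1 ≤ k := (Finset.mem_Icc.mp hk).1
    have := hApos k hk1
    positivity
  obtain ⟨M, hMdef⟩ : ∃ M : ℝ, M = S + 4 * C' / c := ⟨_, rfl⟩
  have hq4 : 0 ≤ 4 * C' / c := by positivity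
  have hM0 : 0 ≤ M := by rw [hMdef]; linarith
  -- key step bound
  have key : ∀ n : ℕ, N ≤ n → (n:ℝ)^β * A n ≤ M → ((n:ℝ)+1)^β * A (n+1) ≤ M := by
    intro n hn hBn
    obtain ⟨⟨hc1, hc2⟩, ⟨hc3, hc4⟩, hn1⟩ := hprop n hn
    have hnpos : (0:ℝ) < n := by exact_mod_cast hn1
    have hnge1 : (1:ℝ) ≤ n := by exact_mod_cast hn1
    set x := (n:ℝ)^(-a) with hxdef
    have hxpos : 0 < x := Real.rpow_pos_of_pos hnpos _
    set R := ((n:ℝ)+1)^β * (n:ℝ)^(-β) with hRdef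
    have hRpos : 0 < R := by
      apply mul_pos (Real.rpow_pos_of_pos (by linarith) _) (Real.rpow_pos_of_pos hnpos _)
    -- bound R ≤ 1 + K * n⁻¹
    have hR : R ≤ 1 + K * (n:ℝ)⁻¹ := by
      have hform : R = (1 + (n:ℝ)⁻¹)^β := by
        rw [hRdef, Real.rpow_neg hnpos.le, ← div_eq_mul_inv,
          ← Real.div_rpow (by linarith) hnpos.le]
        congr 1
        field_simp
      rw [hform]
      have hlog : Real.log (1 + (n:ℝ)⁻¹) ≤ (n:ℝ)⁻¹ := by
        have := Real.log_le_sub_one_of_pos (show (0:ℝ) < 1 + (n:ℝ)⁻¹ by positivity)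
        linarith
      have h5 : (1 + (n:ℝ)⁻¹)^β = Real.exp (Real.log (1 + (n:ℝ)⁻¹) * β) :=
        Real.rpow_def_of_pos (by positivity) _
      have hinv1 : (n:ℝ)⁻¹ ≤ 1 := by
        rw [inv_le_one_iff₀]; right; exact hnge1
      have h6 : Real.exp (Real.log (1 + (n:ℝ)⁻¹) * β) ≤ Real.exp (β * (n:ℝ)⁻¹) := by
        apply Real.exp_le_exp.mpr
        rw [mul_comm]
        exact mul_le_mul_of_nonneg_left hlog hβ.le
      have h7 : Real.exp (β * (n:ℝ)⁻¹) ≤ 1 + (β * (n:ℝ)⁻¹) * Real.exp β := by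
        apply exp_le_one_add_aux
        · positivity
        · nlinarith
      calc (1 + (n:ℝ)⁻¹)^β ≤ Real.exp (β * (n:ℝ)⁻¹) := by rw [h5]; exact h6
        _ ≤ 1 + (β * (n:ℝ)⁻¹) * Real.exp β := h7
        _ = 1 + K * (n:ℝ)⁻¹ := by rw [hKdef]; ring
    have hRK : R ≤ 1 + K := by
      have hinv1 : (n:ℝ)⁻¹ ≤ 1 := by rw [inv_le_one_iff₀]; right; exact hnge1
      nlinarith
    -- K * n⁻¹ ≤ (c/8) * x
    have hKn : K * (n:ℝ)⁻¹ ≤ (c/8) * x := by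
      have : (n:ℝ)⁻¹ = (n:ℝ)^(a-1) * x := by
        rw [hxdef, ← Real.rpow_add hnpos, show a - 1 + -a = -1 by ring,
          Real.rpow_neg_one]
      rw [this, ← mul_assoc]
      exact mul_le_mul_of_nonneg_right hc4 hxpos.le
    -- bounds on the multiplicative factor
    have hcx : Cseq n * x ≤ 1/2 := by
      calc Cseq n * x ≤ (c+1) * x := mul_le_mul_of_nonneg_right hc2 hxpos.le
        _ ≤ 1/2 := hc3
    have hcx0 : 0 ≤ Cseq n * x := by
      have : 0 < Cseq n := by linarith
      positivity
    have hF0 : 0 ≤ R * (1 - Cseq n * x) := by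
      apply mul_nonneg hRpos.le; linarith
    have hF : R * (1 - Cseq n * x) ≤ 1 - (c/4) * x := by
      have h8 : R * (1 - Cseq n * x) ≤ (1 + K * (n:ℝ)⁻¹) * (1 - Cseq n * x) := by
        apply mul_le_mul_of_nonneg_right hR; linarith
      have h9 : (1 + K * (n:ℝ)⁻¹) * (1 - Cseq n * x) ≤ 1 - Cseq n * x + K * (n:ℝ)⁻¹ := by
        have hKninv : 0 ≤ K * (n:ℝ)⁻¹ := by positivity
        nlinarith
      have h10 : c/2 * x ≤ Cseq n * x := mul_le_mul_of_nonneg_right hc1 hxpos.le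
      nlinarith
    -- recursion in terms of B
    have hBrec : ((n:ℝ)+1)^β * A (n+1)
        = (R * (1 - Cseq n * x)) * ((n:ℝ)^β * A n) + C * R * x := by
      have hq : (n:ℝ)^(-β) * (n:ℝ)^β = 1 := by
        rw [← Real.rpow_add hnpos]; norm_num
      have hsplit : (n:ℝ)^(-a-β) = x * (n:ℝ)^(-β) := by
        rw [hxdef, ← Real.rpow_add hnpos]; ring_nf
      rw [hrec n hn1, hsplit, hRdef]
      linear_combination (-(((n:ℝ)+1)^β * (1 - Cseq n * x) * A n)) * hq
    rw [hBrec]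
    have hBn0 : 0 ≤ (n:ℝ)^β * A n := by
      have := hApos n hn1; positivity
    have hstep1 : (R * (1 - Cseq n * x)) * ((n:ℝ)^β * A n) ≤ (1 - (c/4) * x) * M := by
      calc (R * (1 - Cseq n * x)) * ((n:ℝ)^β * A n) ≤ (R * (1 - Cseq n * x)) * M :=
            mul_le_mul_of_nonneg_left hBn hF0
        _ ≤ (1 - (c/4) * x) * M := mul_le_mul_of_nonneg_right hF hM0
    have hstep2 : C * R * x ≤ C' * x := by
      apply mul_le_mul_of_nonneg_right _ hxpos.le
      rw [hC'def]
      exact mul_le_mul_of_nonneg_left hRK hC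
    have hMge : 4 * C' / c ≤ M := by rw [hMdef]; linarith
    have : (1 - (c/4) * x) * M + C' * x ≤ M := by
      have h11 : C' * x ≤ (c/4) * x * M := by
        rw [div_le_iff₀ hc] at hMge
        nlinarith [mul_le_mul_of_nonneg_right hMge hxpos.le]
      nlinarith
    linarith
  -- induction: B n ≤ M for n ≥ N
  have hind : ∀ n : ℕ, N ≤ n → (n:ℝ)^β * A n ≤ M := by
    intro n hn
    induction n, hn using Nat.le_induction with
    | base =>
      have hmem : N ∈ Finset.Icc 1 N := Finset.mem_Icc.mpr ⟨hN1, le_refl _⟩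
      have hle : (N:ℝ)^β * A N ≤ S := by
        rw [hSdef]
        apply Finset.single_le_sum (f := fun k : ℕ => (k:ℝ)^β * A k) _ hmem
        intro k hk
        have hk1 : 1 ≤ k := (Finset.mem_Icc.mp hk).1
        have := hApos k hk1
        positivity
      calc (N:ℝ)^β * A N ≤ S := hle
        _ ≤ M := by rw [hMdef]; linarith
    | succ m hm ih =>
      have h := key m hm ih
      push_cast
      exact h
  refine ⟨M, fun n hn => ?_⟩
  rcases le_or_gt N n with h | h
  · exact hind n h
  · have hmem : n ∈ Finset.Icc 1 N := Finset.mem_Icc.mpr ⟨hn, h.le⟩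
    have hle : (n:ℝ)^β * A n ≤ S := by
      rw [hSdef]
      apply Finset.single_le_sum (f := fun k : ℕ => (k:ℝ)^β * A k) _ hmem
      intro k hk
      have hk1 : 1 ≤ k := (Finset.mem_Icc.mp hk).1
      have := hApos k hk1
      positivity
    calc (n:ℝ)^β * A n ≤ S := hle
      _ ≤ M := by rw [hMdef]; linarith
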